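/- Let n ≥ 1 and let f be a polynomial of degree n with real coefficients. Then the maximum of |f| over [-1,1] is at most 14 times the maximum of |f| over the finite set N = {cos(π(k-1)/(2n)) : 1 ≤ k ≤ 2n+1}. -/

import Mathlib

open Complex Finset

noncomputable def ee (j : ℤ) (x : ℝ) : ℂ := Complex.exp (((j : ℝ) * x : ℝ) * Complex.I)

lemma ee_eq_ee (a b : ℤ) (x y : ℝ) (h : (a : ℝ) * x = (b : ℝ) * y) : ee a x = ee b y := by
  rw [ee, ee, h]

lemma ee_mul (a b : ℤ) (x : ℝ) : ee a x * ee b x = ee (a + b) x := by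
  rw [ee, ee, ee, ← Complex.exp_add]
  congr 1
  push_cast
  ring

lemma ee_conj (a : ℤ) (x : ℝ) : (starRingEnd ℂ) (ee a x) = ee (-a) x := by
  rw [ee, ee, ← Complex.exp_conj, map_mul, Complex.conj_ofReal, Complex.conj_I]
  congr 1
  push_cast
  ring

lemma ee_pow (a : ℤ) (x : ℝ) (p : ℕ) : ee a x ^ p = ee (a * p) x := by
  rw [ee, ee, ← Complex.exp_nat_mul]
  congr 1
  push_cast
  ring

lemma ee_nat_mul (a : ℤ) (x : ℝ) (k : ℕ) : ee a ((k : ℝ) * x) = ee a x ^ k := by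
  rw [ee, ee, ← Complex.exp_nat_mul]
  congr 1
  push_cast
  ring

lemma ee_zero (x : ℝ) : ee 0 x = 1 := by simp [ee]

lemma abs_ee (a : ℤ) (x : ℝ) : ‖ee a x‖ = 1 := by
  rw [ee]; exact Complex.norm_exp_ofReal_mul_I _

lemma ee_two_pi (j : ℤ) : ee j (2 * Real.pi) = 1 := by
  rw [ee]
  have h : (((j : ℝ) * (2 * Real.pi) : ℝ) : ℂ) * Complex.I
      = (j : ℂ) * (2 * (Real.pi : ℂ) * Complex.I) := by push_cast; ring
  rw [h]
  exact Complex.exp_int_mul_two_pi_mul_I j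

/-- grid points (angles) -/
noncomputable def tt (n : ℕ) (k : ℕ) : ℝ := (k : ℝ) * (Real.pi / (2 * n))

lemma quad (n : ℕ) (hn : 1 ≤ n) (j : ℤ) (hj : j.natAbs < 4 * n) :
    ∑ k ∈ Finset.range (4 * n), ee j (tt n k) =
      if j = 0 then ((4 * n : ℕ) : ℂ) else 0 := by
  have hn0 : (n : ℝ) ≠ 0 := Nat.cast_ne_zero.mpr (by omega)
  split_ifs with h
  · subst h
    simp [ee_zero, tt]
  · have hrw : ∀ k : ℕ, ee j (tt n k) = ee j (Real.pi / (2 * n)) ^ k := fun k =>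
      ee_nat_mul j (Real.pi / (2 * n)) k
    rw [Finset.sum_congr rfl (fun k _ => hrw k)]
    have hz1 : ee j (Real.pi / (2 * n)) ≠ 1 := by
      intro hz
      rw [ee, Complex.exp_eq_one_iff] at hz
      obtain ⟨m, hm⟩ := hz
      have hm' : (((j : ℝ) * (Real.pi / (2 * (n : ℝ))) : ℝ) : ℂ) * Complex.I
          = (((m : ℝ) * (2 * Real.pi) : ℝ) : ℂ) * Complex.I := by
        rw [hm]; push_cast; ring
      have h2 : (j : ℝ) * (Real.pi / (2 * n)) = (m : ℝ) * (2 * Real.pi) := by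
        have := mul_right_cancel₀ Complex.I_ne_zero hm'
        exact_mod_cast this
      have hb : Real.pi / (2 * (n : ℝ)) ≠ 0 := by positivity
      have h3 : (j : ℝ) = (m : ℝ) * ((4 * n : ℕ) : ℝ) := by
        apply mul_right_cancel₀ hb
        rw [h2]
        field_simp
        push_cast
        ring
      have h5 : j = m * ((4 * n : ℕ) : ℤ) := by exact_mod_cast h3
      have hm0 : m ≠ 0 := by
        rintro rfl
        simp at h5
        exact h h5
      have h6 : j.natAbs = m.natAbs * (4 * n) := by
        rw [h5, Int.natAbs_mul, Int.natAbs_natCast]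
      have h7 : 1 ≤ m.natAbs := Int.natAbs_pos.mpr hm0
      have h8 : 4 * n ≤ m.natAbs * (4 * n) := Nat.le_mul_of_pos_left _ (by omega)
      omega
    rw [geom_sum_eq hz1]
    have hzn : ee j (Real.pi / (2 * n)) ^ (4 * n) = 1 := by
      rw [ee_pow]
      rw [ee_eq_ee (j * ((4 * n : ℕ) : ℤ)) j (Real.pi / (2 * n)) (2 * Real.pi) (by push_cast; field_simp; ring)]
      exact ee_two_pi j
    rw [hzn]
    simp

noncomputable def dsum (M : ℕ) (ψ : ℝ) : ℂ := ∑ l ∈ Finset.range M, ee l ψ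

noncomputable def kk (M : ℕ) (ψ : ℝ) : ℂ := dsum M ψ * (starRingEnd ℂ) (dsum M ψ)

lemma kk_eq (M : ℕ) (ψ : ℝ) : kk M ψ = ((Complex.normSq (dsum M ψ) : ℝ) : ℂ) :=
  Complex.mul_conj _

lemma count_card (M : ℕ) (j : ℤ) :
    ((Finset.range M ×ˢ Finset.range M).filter (fun p => (p.1 : ℤ) - (p.2 : ℤ) = j)).card
      = M - j.natAbs := by
  rw [show M - j.natAbs = (Finset.range (M - j.natAbs)).card by simp]
  apply Finset.card_bij' (i := fun p _ => p.2 - (-j).toNat)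
    (j := fun i _ => (i + j.toNat, i + (-j).toNat))
  · intro p hp
    simp only [Finset.mem_filter, Finset.mem_product, Finset.mem_range] at hp ⊢
    omega
  · intro i hi
    simp only [Finset.mem_filter, Finset.mem_product, Finset.mem_range] at hi ⊢
    omega
  · intro p hp
    simp only [Finset.mem_filter, Finset.mem_product, Finset.mem_range] at hp
    obtain ⟨⟨h1, h2⟩, h3⟩ := hp
    ext <;> simp <;> omega
  · intro i hi
    simp only [Finset.mem_range] at hi
    omega

lemma count_sum (M : ℕ) (j : ℤ) (c : ℂ) :
    (∑ l ∈ Finset.range M, ∑ l' ∈ Finset.range M,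
        if (l : ℤ) - (l' : ℤ) = j then c else 0) = ((M - j.natAbs : ℕ) : ℂ) * c := by
  rw [← Finset.sum_product']
  rw [Finset.sum_ite, Finset.sum_const_zero, add_zero, Finset.sum_const, count_card]
  simp [nsmul_eq_mul]

lemma rep (n M : ℕ) (hn : 1 ≤ n) (hM : M ≤ 2 * n) (j : ℤ) (hjn : j.natAbs ≤ n) (θ : ℝ) :
    ∑ k ∈ Finset.range (4 * n), ee j (tt n k) * kk M (θ - tt n k)
      = ((M - j.natAbs : ℕ) : ℂ) * (((4 * n : ℕ) : ℂ) * ee j θ) := by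
  calc ∑ k ∈ Finset.range (4 * n), ee j (tt n k) * kk M (θ - tt n k)
      = ∑ k ∈ Finset.range (4 * n), ∑ l ∈ Finset.range M, ∑ l' ∈ Finset.range M,
          ee ((l : ℤ) - l') θ * ee (j - l + l') (tt n k) := by
        refine Finset.sum_congr rfl fun k _ => ?_
        rw [kk, dsum, map_sum]
        rw [Finset.sum_mul, Finset.mul_sum]
        refine Finset.sum_congr rfl fun l _ => ?_
        rw [Finset.mul_sum, Finset.mul_sum]
        refine Finset.sum_congr rfl fun l' _ => ?_
        rw [ee_conj]
        simp only [ee, ← Complex.exp_add]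
        congr 1
        push_cast
        ring
    _ = ∑ l ∈ Finset.range M, ∑ l' ∈ Finset.range M,
          ee ((l : ℤ) - l') θ * ∑ k ∈ Finset.range (4 * n), ee (j - l + l') (tt n k) := by
        rw [Finset.sum_comm]
        refine Finset.sum_congr rfl fun l _ => ?_
        rw [Finset.sum_comm]
        exact Finset.sum_congr rfl fun l' _ => (Finset.mul_sum _ _ _).symm
    _ = ∑ l ∈ Finset.range M, ∑ l' ∈ Finset.range M,
          (if (l : ℤ) - (l' : ℤ) = j then (((4 * n : ℕ) : ℂ) * ee j θ) else 0) := by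
        refine Finset.sum_congr rfl fun l hl => Finset.sum_congr rfl fun l' hl' => ?_
        simp only [Finset.mem_range] at hl hl'
        rw [quad n hn _ (by omega)]
        by_cases h : (l : ℤ) - (l' : ℤ) = j
        · rw [if_pos (by omega), if_pos h, ← h]
          ring
        · rw [if_neg (by omega), if_neg h, mul_zero]
    _ = ((M - j.natAbs : ℕ) : ℂ) * (((4 * n : ℕ) : ℂ) * ee j θ) := count_sum M j _

noncomputable def vv (n : ℕ) (ψ : ℝ) : ℂ :=
  (1 / (n : ℂ)) * kk (2 * n) ψ - (1 / (n : ℂ)) * kk n ψ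

lemma repV (n : ℕ) (hn : 1 ≤ n) (j : ℤ) (hjn : j.natAbs ≤ n) (θ : ℝ) :
    ∑ k ∈ Finset.range (4 * n), ee j (tt n k) * vv n (θ - tt n k)
      = ((4 * n : ℕ) : ℂ) * ee j θ := by
  have hn0 : (n : ℂ) ≠ 0 := Nat.cast_ne_zero.mpr (by omega)
  have e1 := rep n (2 * n) hn le_rfl j (by omega) θ
  have e2 := rep n n hn (by omega) j hjn θ
  calc ∑ k ∈ Finset.range (4 * n), ee j (tt n k) * vv n (θ - tt n k)
      = (1 / (n : ℂ)) * ∑ k ∈ Finset.range (4 * n), ee j (tt n k) * kk (2 * n) (θ - tt n k)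
        - (1 / (n : ℂ)) * ∑ k ∈ Finset.range (4 * n), ee j (tt n k) * kk n (θ - tt n k) := by
        rw [Finset.mul_sum, Finset.mul_sum, ← Finset.sum_sub_distrib]
        refine Finset.sum_congr rfl fun k _ => ?_
        rw [vv]
        ring
    _ = ((4 * n : ℕ) : ℂ) * ee j θ := by
        rw [e1, e2]
        rw [Nat.cast_sub (by omega : j.natAbs ≤ 2 * n), Nat.cast_sub hjn]
        push_cast
        field_simp
        ring

lemma sum_normSq (n M : ℕ) (hn : 1 ≤ n) (hM : M ≤ 2 * n) (θ : ℝ) :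
    ∑ k ∈ Finset.range (4 * n), Complex.normSq (dsum M (θ - tt n k))
      = (M : ℝ) * (4 * n) := by
  have h := rep n M hn hM 0 (by simp) θ
  simp only [ee_zero, one_mul, mul_one, Int.natAbs_zero, Nat.sub_zero] at h
  simp only [kk_eq] at h
  have h2 : ((∑ k ∈ Finset.range (4 * n), Complex.normSq (dsum M (θ - tt n k)) : ℝ) : ℂ)
      = (((M : ℝ) * (4 * n) : ℝ) : ℂ) := by
    push_cast
    push_cast at h
    rw [h]
  exact_mod_cast h2

lemma leb (n : ℕ) (hn : 1 ≤ n) (θ : ℝ) :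
    ∑ k ∈ Finset.range (4 * n), ‖vv n (θ - tt n k)‖ ≤ 12 * n := by
  have hn0 : (n : ℝ) ≠ 0 := Nat.cast_ne_zero.mpr (by omega)
  have hnpos : (0 : ℝ) < n := by positivity
  have h1 := sum_normSq n (2 * n) hn le_rfl θ
  have h2 := sum_normSq n n hn (by omega) θ
  have hb : ∀ ψ : ℝ, ‖vv n ψ‖
      ≤ (1 / (n : ℝ)) * (Complex.normSq (dsum (2 * n) ψ) + Complex.normSq (dsum n ψ)) := by
    intro ψ
    rw [vv, kk_eq, kk_eq, sub_eq_add_neg]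
    refine le_trans (norm_add_le _ _) ?_
    rw [norm_neg]
    rw [norm_mul, norm_mul, Complex.norm_real, Complex.norm_real, Real.norm_eq_abs, Real.norm_eq_abs]
    have hne : ‖1 / (n : ℂ)‖ = 1 / (n : ℝ) := by
      rw [norm_div]
      simp
    rw [hne, _root_.abs_of_nonneg (Complex.normSq_nonneg _),
      _root_.abs_of_nonneg (Complex.normSq_nonneg _), mul_add]
  calc ∑ k ∈ Finset.range (4 * n), ‖vv n (θ - tt n k)‖
      ≤ ∑ k ∈ Finset.range (4 * n), (1 / (n : ℝ)) *
          (Complex.normSq (dsum (2 * n) (θ - tt n k)) + Complex.normSq (dsum n (θ - tt n k))) :=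
        Finset.sum_le_sum fun k _ => hb _
    _ = (1 / (n : ℝ)) * ((2 * n : ℝ) * (4 * n) + (n : ℝ) * (4 * n)) := by
        rw [← Finset.mul_sum, Finset.sum_add_distrib, h1, h2]
        push_cast
        ring
    _ = 12 * n := by field_simp; ring

lemma cospow (m : ℕ) (x : ℝ) :
    ((Real.cos x : ℝ) : ℂ) ^ m
      = (1 / 2 ^ m : ℂ) * ∑ l ∈ Finset.range (m + 1),
          (m.choose l : ℂ) * ee (2 * l - m) x := by
  have h2 : (2 : ℂ) * ((Real.cos x : ℝ) : ℂ) = ee 1 x + ee (-1) x := by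
    rw [Complex.ofReal_cos, Complex.two_cos, ee, ee]
    push_cast
    ring_nf
  have key : ((2 : ℂ) * ((Real.cos x : ℝ) : ℂ)) ^ m
      = ∑ l ∈ Finset.range (m + 1), (m.choose l : ℂ) * ee (2 * l - m) x := by
    rw [h2, add_pow]
    refine Finset.sum_congr rfl fun l hl => ?_
    simp only [Finset.mem_range] at hl
    rw [ee_pow, ee_pow, ee_mul]
    rw [show (1 * (l : ℤ) + -1 * ((m - l : ℕ) : ℤ)) = 2 * l - m by
      push_cast [Nat.cast_sub (by omega : l ≤ m)]; ring]
    ring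
  rw [mul_pow] at key
  have h2m : (2 : ℂ) ^ m ≠ 0 := pow_ne_zero _ two_ne_zero
  rw [← key, one_div, inv_mul_cancel_left₀ h2m]

lemma repMono (n : ℕ) (hn : 1 ≤ n) (m : ℕ) (hm : m ≤ n) (θ : ℝ) :
    ∑ k ∈ Finset.range (4 * n), ((Real.cos (tt n k) : ℝ) : ℂ) ^ m * vv n (θ - tt n k)
      = ((4 * n : ℕ) : ℂ) * ((Real.cos θ : ℝ) : ℂ) ^ m := by
  calc ∑ k ∈ Finset.range (4 * n), ((Real.cos (tt n k) : ℝ) : ℂ) ^ m * vv n (θ - tt n k)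
      = ∑ l ∈ Finset.range (m + 1), (1 / 2 ^ m : ℂ) * (m.choose l : ℂ) *
          ∑ k ∈ Finset.range (4 * n), ee (2 * l - m) (tt n k) * vv n (θ - tt n k) := by
        simp only [cospow, Finset.mul_sum, Finset.sum_mul]
        rw [Finset.sum_comm]
        refine Finset.sum_congr rfl fun l _ => ?_
        refine Finset.sum_congr rfl fun k _ => by ring
    _ = ∑ l ∈ Finset.range (m + 1), (1 / 2 ^ m : ℂ) * (m.choose l : ℂ) *
          (((4 * n : ℕ) : ℂ) * ee (2 * l - m) θ) := by
        refine Finset.sum_congr rfl fun l hl => ?_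
        simp only [Finset.mem_range] at hl
        rw [repV n hn _ (by omega) θ]
    _ = ((4 * n : ℕ) : ℂ) * ((Real.cos θ : ℝ) : ℂ) ^ m := by
        rw [cospow, Finset.mul_sum, Finset.mul_sum]
        exact Finset.sum_congr rfl fun l _ => by ring

theorem stmt_0 (n : ℕ) (hn : 1 ≤ n) (f : Polynomial ℝ) (hdeg : f.degree = n) :
    ∀ x ∈ Set.Icc (-1 : ℝ) 1,
      |f.eval x| ≤ 14 * (Finset.Icc 1 (2 * n + 1)).sup'
        (Finset.nonempty_Icc.mpr (by omega))
        (fun k => |f.eval (Real.cos (Real.pi * ((k : ℝ) - 1) / (2 * n)))|) := by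
  intro x hx
  obtain ⟨hx1, hx2⟩ := hx
  set θ := Real.arccos x with hθ
  have hxcos : Real.cos θ = x := Real.cos_arccos hx1 hx2
  have hnat : f.natDegree = n := Polynomial.natDegree_eq_of_degree_eq_some hdeg
  set S : ℝ := (Finset.Icc 1 (2 * n + 1)).sup'
      (Finset.nonempty_Icc.mpr (by omega))
      (fun k => |f.eval (Real.cos (Real.pi * ((k : ℝ) - 1) / (2 * n)))|) with hSdef
  -- S is nonnegative
  have hS0 : 0 ≤ S := by
    have hmem1 : (1 : ℕ) ∈ Finset.Icc 1 (2 * n + 1) := by simp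
    have h := Finset.le_sup'
      (fun k : ℕ => |f.eval (Real.cos (Real.pi * ((k : ℝ) - 1) / (2 * n)))|) hmem1
    rw [hSdef]
    exact le_trans (abs_nonneg _) h
  -- every grid value is bounded by S
  have hnet : ∀ k : ℕ, k ≤ 2 * n → |f.eval (Real.cos (tt n k))| ≤ S := by
    intro k hk
    have hmem : k + 1 ∈ Finset.Icc 1 (2 * n + 1) := by simp; omega
    have h := Finset.le_sup'
      (fun k : ℕ => |f.eval (Real.cos (Real.pi * ((k : ℝ) - 1) / (2 * n)))|) hmem
    have harg : Real.pi * (((k + 1 : ℕ) : ℝ) - 1) / (2 * n) = tt n k := by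
      rw [tt]; push_cast; ring
    rw [harg] at h
    exact h
  have hS : ∀ k ∈ Finset.range (4 * n), |f.eval (Real.cos (tt n k))| ≤ S := by
    intro k hk
    simp only [Finset.mem_range] at hk
    by_cases hk2 : k ≤ 2 * n
    · exact hnet k hk2
    · have hcos : Real.cos (tt n k) = Real.cos (tt n (4 * n - k)) := by
        have hn0 : (n : ℝ) ≠ 0 := Nat.cast_ne_zero.mpr (by omega)
        have harg : tt n k = 2 * Real.pi - tt n (4 * n - k) := by
          rw [tt, tt]
          push_cast [Nat.cast_sub (le_of_lt hk)]
          field_simp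
          ring
        rw [harg, Real.cos_two_pi_sub]
      rw [hcos]
      exact hnet (4 * n - k) (by omega)
  -- reproduction identity for f
  have repPoly : ∑ k ∈ Finset.range (4 * n),
        ((f.eval (Real.cos (tt n k)) : ℝ) : ℂ) * vv n (θ - tt n k)
      = ((4 * n : ℕ) : ℂ) * ((f.eval (Real.cos θ) : ℝ) : ℂ) := by
    have hev : ∀ y : ℝ, ((f.eval y : ℝ) : ℂ)
        = ∑ m ∈ Finset.range (n + 1), ((f.coeff m : ℝ) : ℂ) * ((y : ℝ) : ℂ) ^ m := by
      intro y
      rw [Polynomial.eval_eq_sum_range, hnat]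
      push_cast
      rfl
    simp only [hev]
    simp only [Finset.sum_mul]
    rw [Finset.sum_comm, Finset.mul_sum]
    refine Finset.sum_congr rfl fun m hm => ?_
    have hmn : m ≤ n := by simp at hm; omega
    calc ∑ k ∈ Finset.range (4 * n),
          ((f.coeff m : ℝ) : ℂ) * ((Real.cos (tt n k) : ℝ) : ℂ) ^ m * vv n (θ - tt n k)
        = ((f.coeff m : ℝ) : ℂ) * ∑ k ∈ Finset.range (4 * n),
            ((Real.cos (tt n k) : ℝ) : ℂ) ^ m * vv n (θ - tt n k) := by
          rw [Finset.mul_sum]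
          exact Finset.sum_congr rfl fun k _ => by ring
      _ = ((f.coeff m : ℝ) : ℂ) * (((4 * n : ℕ) : ℂ) * ((Real.cos θ : ℝ) : ℂ) ^ m) := by
          rw [repMono n hn m hmn θ]
      _ = ((4 * n : ℕ) : ℂ) * (((f.coeff m : ℝ) : ℂ) * ((Real.cos θ : ℝ) : ℂ) ^ m) := by
          ring
  rw [hxcos] at repPoly
  -- main estimate
  have hmain : (4 * n : ℝ) * |f.eval x| ≤ S * (12 * n) := by
    calc (4 * n : ℝ) * |f.eval x|
        = ‖((4 * n : ℕ) : ℂ) * ((f.eval x : ℝ) : ℂ)‖ := by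
          rw [norm_mul, Complex.norm_real, Real.norm_eq_abs]
          simp
      _ = ‖∑ k ∈ Finset.range (4 * n),
            ((f.eval (Real.cos (tt n k)) : ℝ) : ℂ) * vv n (θ - tt n k)‖ := by
          rw [repPoly]
      _ ≤ ∑ k ∈ Finset.range (4 * n),
            ‖((f.eval (Real.cos (tt n k)) : ℝ) : ℂ) * vv n (θ - tt n k)‖ :=
          norm_sum_le _ _
      _ = ∑ k ∈ Finset.range (4 * n),
            |f.eval (Real.cos (tt n k))| * ‖vv n (θ - tt n k)‖ := by
          refine Finset.sum_congr rfl fun k _ => ?_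
          rw [norm_mul, Complex.norm_real, Real.norm_eq_abs]
      _ ≤ ∑ k ∈ Finset.range (4 * n), S * ‖vv n (θ - tt n k)‖ :=
          Finset.sum_le_sum fun k hk =>
            mul_le_mul_of_nonneg_right (hS k hk) (norm_nonneg _)
      _ = S * ∑ k ∈ Finset.range (4 * n), ‖vv n (θ - tt n k)‖ := by
          rw [Finset.mul_sum]
      _ ≤ S * (12 * n) := mul_le_mul_of_nonneg_left (leb n hn θ) hS0
  have hnpos : (0 : ℝ) < n := by exact_mod_cast Nat.pos_of_ne_zero (by omega)
  nlinarith [hmain, hS0, hnpos]
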